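/- Among curves m ∈ W^{1,2}((−1,1), S²) with m(−1) = e₂ and m(1) = −e₂, the minimum value of ∫_{−1}^{1}|m'(t)|² dt is π²/2. -/

import Mathlib

open MeasureTheory

open Set Filter Metric Real
open scoped Topology

namespace MinEnergyAux

noncomputable section

variable {E : Type*} [NormedAddCommGroup E] [NormedSpace ℝ E] [CompleteSpace E]



lemma ae_hasDerivAt_primitive {f : ℝ → E}
    (hf : IntegrableOn f (Set.Ioc (-1:ℝ) 1) volume) :
    ∀ᵐ x ∂(volume : Measure ℝ), x ∈ Set.Ioo (-1:ℝ) 1 →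
      HasDerivAt (fun t => ∫ s in Set.Ioc (-1:ℝ) t, f s) (f x) x := by
  set f₀ : ℝ → E := (Set.Ioc (-1:ℝ) 1).indicator f with hf₀def
  have hint : Integrable f₀ volume := (integrable_indicator_iff measurableSet_Ioc).2 hf
  have hloc : LocallyIntegrable f₀ volume := hint.locallyIntegrable
  filter_upwards [(Besicovitch.vitaliFamily (volume : Measure ℝ)).ae_tendsto_average_norm_sub hloc]
    with x hx hxI
  have hx' : Tendsto (fun r => ⨍ y in closedBall x r, ‖f₀ y - f₀ x‖) (𝓝[>] 0) (𝓝 0) :=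
    hx.comp (Besicovitch.tendsto_filterAt volume x)
  have hfx : f₀ x = f x := indicator_of_mem (Ioo_subset_Ioc_self hxI) f
  -- the localized primitive
  have hQ : HasDerivAt (fun t => ∫ s in (-1:ℝ)..t, f₀ s) (f x) x := by
    rw [hasDerivAt_iff_isLittleO, ← hfx, Asymptotics.isLittleO_iff]
    intro c hc
    have hev : ∀ᶠ r in 𝓝[>] (0:ℝ),
        (⨍ y in closedBall x r, ‖f₀ y - f₀ x‖) < c / 2 :=
      hx'.eventually_lt_const (by linarith)
    rcases mem_nhdsGT_iff_exists_Ioc_subset.1 hev with ⟨δ, hδ, hsub⟩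
    have hδ0 : (0:ℝ) < δ := hδ
    filter_upwards [Metric.ball_mem_nhds x hδ0] with t ht
    rcases eq_or_ne t x with rfl | htx
    · simp
    · set r := |t - x| with hrdef
      have hr0 : 0 < r := abs_pos.2 (sub_ne_zero.2 htx)
      have hrδ : r ≤ δ := by
        have := mem_ball_iff_norm.1 ht
        simpa [hrdef, Real.norm_eq_abs] using this.le
      have havg : (⨍ y in closedBall x r, ‖f₀ y - f₀ x‖) < c / 2 := hsub ⟨hr0, hrδ⟩
      have h1 : (∫ s in (-1:ℝ)..t, f₀ s) - (∫ s in (-1:ℝ)..x, f₀ s)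
          = ∫ s in x..t, f₀ s :=
        intervalIntegral.integral_interval_sub_left hint.intervalIntegrable
          hint.intervalIntegrable
      have h2 : (∫ s in x..t, f₀ s) - (t - x) • f₀ x = ∫ s in x..t, (f₀ s - f₀ x) := by
        rw [intervalIntegral.integral_sub hint.intervalIntegrable
          (intervalIntegrable_const), intervalIntegral.integral_const]
      have hIsub : Set.uIoc x t ⊆ closedBall x r := by
        intro y hy
        have h5 : -r ≤ t - x ∧ t - x ≤ r := abs_le.1 (le_of_eq rfl)
        have h1' : x ⊓ t < y := hy.1
        have h2' : y ≤ x ⊔ t := hy.2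
        have hins : x - r ≤ x ⊓ t := le_inf (by linarith) (by linarith [h5.1])
        have hsup : x ⊔ t ≤ x + r := sup_le (by linarith) (by linarith [h5.2])
        rw [mem_closedBall, Real.dist_eq]
        exact abs_le.2 ⟨by linarith, by linarith⟩
      have hnormint : IntegrableOn (fun y => ‖f₀ y - f₀ x‖) (closedBall x r) volume := by
        apply Integrable.norm
        exact hint.integrableOn.sub (integrableOn_const measure_closedBall_lt_top.ne)
      have h3 : ‖∫ s in x..t, (f₀ s - f₀ x)‖ ≤ ∫ y in closedBall x r, ‖f₀ y - f₀ x‖ := by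
        refine intervalIntegral.norm_integral_le_integral_norm_uIoc.trans ?_
        exact setIntegral_mono_set hnormint
          (Eventually.of_forall fun y => norm_nonneg _)
          (HasSubset.Subset.eventuallyLE hIsub)
      have h4 : (∫ y in closedBall x r, ‖f₀ y - f₀ x‖)
          = (2 * r) * ⨍ y in closedBall x r, ‖f₀ y - f₀ x‖ := by
        rw [setAverage_eq]
        rw [measureReal_def, Real.volume_closedBall, ENNReal.toReal_ofReal (by linarith)]
        rw [smul_eq_mul, ← mul_assoc, mul_inv_cancel₀ (by linarith), one_mul]
      calc ‖(∫ s in (-1:ℝ)..t, f₀ s) - (∫ s in (-1:ℝ)..x, f₀ s) - (t - x) • f₀ x‖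
          = ‖∫ s in x..t, (f₀ s - f₀ x)‖ := by rw [h1, h2]
        _ ≤ (2 * r) * ⨍ y in closedBall x r, ‖f₀ y - f₀ x‖ := by rw [← h4]; exact h3
        _ ≤ (2 * r) * (c / 2) := by
            apply mul_le_mul_of_nonneg_left havg.le (by linarith)
        _ = c * r := by ring
        _ = c * ‖t - x‖ := by rw [hrdef, Real.norm_eq_abs]
  -- transfer to the original primitive
  have heq : (fun t => ∫ s in Set.Ioc (-1:ℝ) t, f s) =ᶠ[𝓝 x]
      (fun t => ∫ s in (-1:ℝ)..t, f₀ s) := by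
    filter_upwards [isOpen_Ioo.mem_nhds hxI] with t ht
    have h1 : ∫ s in Set.Ioc (-1:ℝ) t, f s = ∫ s in Set.Ioc (-1:ℝ) t, f₀ s := by
      refine (setIntegral_congr_fun measurableSet_Ioc fun s hs => ?_).symm
      exact indicator_of_mem (show s ∈ Set.Ioc (-1:ℝ) 1 from ⟨hs.1, hs.2.trans ht.2.le⟩) f
    rw [h1, intervalIntegral.integral_of_le (by linarith [ht.1])]
  exact hQ.congr_of_eventuallyEq heq


lemma ftc_comp {h : ℝ → ℝ} (hi : Integrable h volume) {D φ : ℝ → ℝ}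
    (hD : Continuous D) {C : ℝ} (hC0 : 0 ≤ C) (hC : ∀ s, |D s| ≤ C)
    (hφ : ∀ s, HasDerivAt φ (D s) s) (c : ℝ) :
    ∫ t in Set.Ioc (-1:ℝ) 1, D (c + ∫ s in (-1:ℝ)..t, h s) * h t
      = φ (c + ∫ s in (-1:ℝ)..1, h s) - φ c := by
  set y : ℝ → ℝ := fun t => c + ∫ s in (-1:ℝ)..t, h s with hydef
  have hycont : Continuous y := continuous_const.add (hi.continuous_primitive (-1))
  have hφlip : ∀ a b : ℝ, |φ a - φ b| ≤ C * |a - b| := by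
    intro a b
    have := convex_univ.norm_image_sub_le_of_norm_hasDerivWithin_le
      (f := φ) (f' := D) (fun x _ => (hφ x).hasDerivWithinAt)
      (fun x _ => by simpa [Real.norm_eq_abs] using hC x) (Set.mem_univ b) (Set.mem_univ a)
    simpa [Real.norm_eq_abs] using this
  apply eq_of_forall_dist_le
  intro ε hε
  set Hnorm : ℝ := ∫ t in Set.Ioc (-1:ℝ) 1, |h t| with hHdef
  have hHnn : 0 ≤ Hnorm := setIntegral_nonneg measurableSet_Ioc (fun t _ => abs_nonneg _)
  set M : ℝ := |c| + Hnorm with hMdef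
  set ε₁ : ℝ := ε / (3 * (Hnorm + 1)) with hε₁def
  have hε₁pos : 0 < ε₁ := by positivity
  obtain ⟨δ', hδ'pos, hδ'⟩ := Metric.uniformContinuousOn_iff_le.1
    (isCompact_Icc.uniformContinuousOn_of_continuous
      (s := Set.Icc (-(M+1)) (M+1)) hD.continuousOn) ε₁ hε₁pos
  set δ : ℝ := min δ' (min 1 (ε / (3 * (C + 1)))) with hδdef
  have hδpos : 0 < δ := by
    apply lt_min hδ'pos
    apply lt_min one_pos
    positivity
  have hδ1 : δ ≤ 1 := (min_le_right _ _).trans (min_le_left _ _)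
  have hδδ' : δ ≤ δ' := min_le_left _ _
  have hδε : δ ≤ ε / (3 * (C + 1)) := (min_le_right _ _).trans (min_le_right _ _)
  obtain ⟨k, -, hk1, hkcont, hkint⟩ := hi.exists_hasCompactSupport_integral_sub_le hδpos
  have hk1' : (∫ x, |h x - k x|) ≤ δ := by simpa [Real.norm_eq_abs] using hk1
  have habs : IntegrableOn (fun t => |h t|) (Set.Ioc (-1:ℝ) 1) volume :=
    hi.norm.integrableOn
  set Y : ℝ → ℝ := fun t => c + ∫ s in (-1:ℝ)..t, k s with hYdef
  have hYd : ∀ t, HasDerivAt Y (k t) t := by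
    intro t
    exact (intervalIntegral.integral_hasDerivAt_right (hkcont.intervalIntegrable _ _)
      (hkcont.stronglyMeasurableAtFilter _ _) hkcont.continuousAt).const_add c
  have hYcont : Continuous Y := continuous_iff_continuousAt.2 fun t => (hYd t).continuousAt
  have hYm1 : Y (-1) = c := by simp [hYdef]
  have hkDint : IntervalIntegrable (fun t => D (Y t) * k t) volume (-1) 1 :=
    (((hD.comp hYcont).mul hkcont).continuousOn).intervalIntegrable
  have hftc : ∫ t in (-1:ℝ)..1, D (Y t) * k t = φ (Y 1) - φ c := by
    rw [← hYm1]
    exact intervalIntegral.integral_eq_sub_of_hasDerivAt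
      (f := fun u => φ (Y u)) (f' := fun t => D (Y t) * k t)
      (fun t _ => by exact (hφ (Y t)).comp t (hYd t)) hkDint
  have hdiff : ∀ t : ℝ, |Y t - y t| ≤ δ := by
    intro t
    have heq : Y t - y t = ∫ s in (-1:ℝ)..t, (k s - h s) := by
      rw [intervalIntegral.integral_sub (hkcont.intervalIntegrable _ _)
        hi.intervalIntegrable]
      simp only [hYdef, hydef]
      ring
    rw [heq]
    calc |∫ s in (-1:ℝ)..t, (k s - h s)| ≤ ∫ s in Set.uIoc (-1:ℝ) t, |k s - h s| := by
          simpa [Real.norm_eq_abs] using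
            intervalIntegral.norm_integral_le_integral_norm_uIoc
              (f := fun s => k s - h s) (a := (-1:ℝ)) (b := t) (μ := volume)
      _ ≤ ∫ s, |k s - h s| := by
          apply setIntegral_le_integral ((hkint.sub hi).norm)
          exact Eventually.of_forall fun s => abs_nonneg _
      _ = ∫ s, |h s - k s| := by simp_rw [abs_sub_comm]
      _ ≤ δ := hk1'
  have hyb : ∀ t ∈ Set.Icc (-1:ℝ) 1, |y t| ≤ M := by
    intro t ht
    have h1 : |y t - c| ≤ Hnorm := by
      have heq : y t - c = ∫ s in (-1:ℝ)..t, h s := by simp [hydef]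
      rw [heq]
      calc |∫ s in (-1:ℝ)..t, h s| ≤ ∫ s in Set.uIoc (-1:ℝ) t, |h s| := by
            simpa [Real.norm_eq_abs] using
              intervalIntegral.norm_integral_le_integral_norm_uIoc
                (f := h) (a := (-1:ℝ)) (b := t) (μ := volume)
        _ ≤ Hnorm := by
            rw [Set.uIoc_of_le ht.1]
            apply setIntegral_mono_set habs
              (Eventually.of_forall fun s => abs_nonneg _)
            exact HasSubset.Subset.eventuallyLE (Set.Ioc_subset_Ioc_right ht.2)
    have h2 : y t = (y t - c) + c := by ring
    rw [hMdef, h2]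
    exact (abs_add_le _ _).trans (by linarith)
  have hmem : ∀ t ∈ Set.Icc (-1:ℝ) 1, y t ∈ Set.Icc (-(M+1)) (M+1) ∧
      Y t ∈ Set.Icc (-(M+1)) (M+1) := by
    intro t ht
    have h1' := abs_le.1 (hyb t ht)
    have h2' := abs_le.1 (hdiff t)
    exact ⟨⟨by linarith, by linarith⟩, ⟨by linarith, by linarith⟩⟩
  have hint1 : IntegrableOn (fun t => D (y t) * h t) (Set.Ioc (-1:ℝ) 1) volume := by
    apply Integrable.bdd_mul (c := C) hi.integrableOn ((hD.comp hycont).aestronglyMeasurable)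
    exact Eventually.of_forall fun t => by simpa [Real.norm_eq_abs] using hC (y t)
  have hint2 : IntegrableOn (fun t => D (Y t) * k t) (Set.Ioc (-1:ℝ) 1) volume :=
    ((((hD.comp hYcont).mul hkcont).continuousOn).integrableOn_compact isCompact_Icc).mono_set
      Set.Ioc_subset_Icc_self
  have hinthk : IntegrableOn (fun t => |h t - k t|) (Set.Ioc (-1:ℝ) 1) volume :=
    ((hi.sub hkint).norm).integrableOn
  have hintk : IntegrableOn (fun t => |k t|) (Set.Ioc (-1:ℝ) 1) volume :=
    hkint.norm.integrableOn
  have hpt : ∀ t ∈ Set.Ioc (-1:ℝ) 1,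
      |D (y t) * h t - D (Y t) * k t| ≤ C * |h t - k t| + ε₁ * |k t| := by
    intro t ht
    have htIcc : t ∈ Set.Icc (-1:ℝ) 1 := Set.Ioc_subset_Icc_self ht
    have hDy := hC (y t)
    have hDd : |D (y t) - D (Y t)| ≤ ε₁ := by
      have hkey := hδ' (y t) (hmem t htIcc).1 (Y t) (hmem t htIcc).2
      rw [Real.dist_eq, Real.dist_eq] at hkey
      apply hkey
      have h3 := hdiff t
      rw [abs_sub_comm] at h3
      linarith
    have heq : D (y t) * h t - D (Y t) * k t
        = D (y t) * (h t - k t) + (D (y t) - D (Y t)) * k t := by ring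
    rw [heq]
    calc |D (y t) * (h t - k t) + (D (y t) - D (Y t)) * k t|
        ≤ |D (y t) * (h t - k t)| + |(D (y t) - D (Y t)) * k t| := abs_add_le _ _
      _ = |D (y t)| * |h t - k t| + |D (y t) - D (Y t)| * |k t| := by rw [abs_mul, abs_mul]
      _ ≤ C * |h t - k t| + ε₁ * |k t| :=
          add_le_add (mul_le_mul_of_nonneg_right hDy (abs_nonneg _))
            (mul_le_mul_of_nonneg_right hDd (abs_nonneg _))
  have hIoc : ∫ t in Set.Ioc (-1:ℝ) 1, |h t - k t| ≤ δ := by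
    calc ∫ t in Set.Ioc (-1:ℝ) 1, |h t - k t| ≤ ∫ t, |h t - k t| := by
          apply setIntegral_le_integral ((hi.sub hkint).norm)
          exact Eventually.of_forall fun s => abs_nonneg _
      _ ≤ δ := hk1'
  have hIk : ∫ t in Set.Ioc (-1:ℝ) 1, |k t| ≤ Hnorm + 1 := by
    have hptk : ∀ t ∈ Set.Ioc (-1:ℝ) 1, |k t| ≤ |h t| + |h t - k t| := by
      intro t _
      calc |k t| = |h t - (h t - k t)| := by congr 1; ring
        _ ≤ |h t| + |h t - k t| := abs_sub _ _
    calc ∫ t in Set.Ioc (-1:ℝ) 1, |k t|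
        ≤ ∫ t in Set.Ioc (-1:ℝ) 1, (|h t| + |h t - k t|) :=
          setIntegral_mono_on hintk (habs.add hinthk) measurableSet_Ioc hptk
      _ = Hnorm + ∫ t in Set.Ioc (-1:ℝ) 1, |h t - k t| := by
          rw [integral_add habs hinthk]
      _ ≤ Hnorm + 1 := by linarith [hIoc.trans hδ1]
  have hCδ : C * δ ≤ ε / 3 := by
    have h31 : (0:ℝ) < 3 * (C + 1) := by positivity
    have h1 : C * δ ≤ C * (ε / (3 * (C + 1))) := mul_le_mul_of_nonneg_left hδε hC0
    have h2 : C * (ε / (3 * (C + 1))) ≤ ε / 3 := by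
      rw [← mul_div_assoc, div_le_div_iff₀ h31 (by norm_num : (0:ℝ) < 3)]
      nlinarith [mul_nonneg hC0 hε.le, hε.le]
    linarith
  have hε₁H : ε₁ * (Hnorm + 1) = ε / 3 := by
    rw [hε₁def]
    field_simp
  have hAB : |(∫ t in Set.Ioc (-1:ℝ) 1, D (y t) * h t)
      - ∫ t in Set.Ioc (-1:ℝ) 1, D (Y t) * k t| ≤ 2 * ε / 3 := by
    rw [← integral_sub hint1 hint2]
    calc |∫ t in Set.Ioc (-1:ℝ) 1, (D (y t) * h t - D (Y t) * k t)|
        ≤ ∫ t in Set.Ioc (-1:ℝ) 1, |D (y t) * h t - D (Y t) * k t| := by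
          simpa [Real.norm_eq_abs] using
            norm_integral_le_integral_norm (f := fun t => D (y t) * h t - D (Y t) * k t)
              (μ := volume.restrict (Set.Ioc (-1:ℝ) 1))
      _ ≤ ∫ t in Set.Ioc (-1:ℝ) 1, (C * |h t - k t| + ε₁ * |k t|) :=
          setIntegral_mono_on ((hint1.sub hint2).norm)
            ((hinthk.const_mul C).add (hintk.const_mul ε₁)) measurableSet_Ioc hpt
      _ = C * (∫ t in Set.Ioc (-1:ℝ) 1, |h t - k t|)
          + ε₁ * ∫ t in Set.Ioc (-1:ℝ) 1, |k t| := by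
          rw [integral_add (hinthk.const_mul C) (hintk.const_mul ε₁),
            integral_const_mul, integral_const_mul]
      _ ≤ C * δ + ε₁ * (Hnorm + 1) :=
          add_le_add (mul_le_mul_of_nonneg_left hIoc hC0)
            (mul_le_mul_of_nonneg_left hIk hε₁pos.le)
      _ ≤ 2 * ε / 3 := by rw [hε₁H] at *; linarith
  have hB : (∫ t in Set.Ioc (-1:ℝ) 1, D (Y t) * k t) = φ (Y 1) - φ c := by
    rw [← intervalIntegral.integral_of_le (by norm_num : (-1:ℝ) ≤ 1)]
    exact hftc
  have hend : |φ (Y 1) - φ (y 1)| ≤ ε / 3 := by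
    calc |φ (Y 1) - φ (y 1)| ≤ C * |Y 1 - y 1| := hφlip _ _
      _ ≤ C * δ := mul_le_mul_of_nonneg_left (hdiff 1) hC0
      _ ≤ ε / 3 := hCδ
  show dist (∫ t in Set.Ioc (-1:ℝ) 1, D (y t) * h t) (φ (y 1) - φ c) ≤ ε
  rw [Real.dist_eq]
  calc |(∫ t in Set.Ioc (-1:ℝ) 1, D (y t) * h t) - (φ (y 1) - φ c)|
      ≤ |(∫ t in Set.Ioc (-1:ℝ) 1, D (y t) * h t)
          - ∫ t in Set.Ioc (-1:ℝ) 1, D (Y t) * k t|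
        + |(∫ t in Set.Ioc (-1:ℝ) 1, D (Y t) * k t) - (φ (y 1) - φ c)| := abs_sub_le _ _ _
    _ ≤ 2 * ε / 3 + ε / 3 := by
        apply add_le_add hAB
        rw [hB]
        have heq : φ (Y 1) - φ c - (φ (y 1) - φ c) = φ (Y 1) - φ (y 1) := by ring
        rw [heq]
        exact hend
    _ = ε := by ring


abbrev E3 := EuclideanSpace ℝ (Fin 3)

def E1 : E3 := EuclideanSpace.single 0 1
def E2 : E3 := EuclideanSpace.single 1 1

lemma inner_E22 : (inner ℝ E2 E2 : ℝ) = 1 := by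
  simp [E2, EuclideanSpace.inner_single_left, EuclideanSpace.single_apply]
lemma inner_E11 : (inner ℝ E1 E1 : ℝ) = 1 := by
  simp [E1, EuclideanSpace.inner_single_left, EuclideanSpace.single_apply]
lemma inner_E21 : (inner ℝ E2 E1 : ℝ) = 0 := by
  simp [E1, E2, EuclideanSpace.inner_single_left, EuclideanSpace.single_apply]

lemma norm_E2 : ‖E2‖ = 1 := by rw [E2, EuclideanSpace.norm_single]; exact norm_one

lemma norm_combo (a b : ℝ) : ‖a • E2 + b • E1‖ ^ 2 = a ^ 2 + b ^ 2 := by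
  rw [← real_inner_self_eq_norm_sq]
  rw [real_inner_add_add_self]
  rw [real_inner_smul_left, real_inner_smul_right, real_inner_smul_left,
    real_inner_smul_right, real_inner_smul_left, real_inner_smul_right]
  rw [inner_E22, inner_E21, inner_E11]
  ring

def geo : ℝ → E3 := fun t => Real.cos (π/2*(t+1)) • E2 + Real.sin (π/2*(t+1)) • E1
def geo' : ℝ → E3 := fun t =>
  (-Real.sin (π/2*(t+1)) * (π/2)) • E2 + (Real.cos (π/2*(t+1)) * (π/2)) • E1

lemma hasDerivAt_geo (t : ℝ) : HasDerivAt geo (geo' t) t := by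
  have ha : HasDerivAt (fun t : ℝ => π/2*(t+1)) (π/2) t := by
    simpa using ((hasDerivAt_id t).add_const 1).const_mul (π/2)
  have hcos : HasDerivAt (fun t : ℝ => Real.cos (π/2*(t+1)))
      (-Real.sin (π/2*(t+1)) * (π/2)) t := (Real.hasDerivAt_cos _).comp t ha
  have hsin : HasDerivAt (fun t : ℝ => Real.sin (π/2*(t+1)))
      (Real.cos (π/2*(t+1)) * (π/2)) t := (Real.hasDerivAt_sin _).comp t ha
  exact (hcos.smul_const E2).add (hsin.smul_const E1)

lemma continuous_geo' : Continuous geo' := by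
  apply Continuous.add
  · exact (((Real.continuous_sin.comp (by continuity)).neg).mul continuous_const).smul
      continuous_const
  · exact ((Real.continuous_cos.comp (by continuity)).mul continuous_const).smul
      continuous_const

lemma norm_geo' (t : ℝ) : ‖geo' t‖ ^ 2 = π ^ 2 / 4 := by
  rw [geo', norm_combo]
  nlinarith [Real.sin_sq_add_cos_sq (π/2*(t+1))]

lemma norm_geo (t : ℝ) : ‖geo t‖ = 1 := by
  have h1 : ‖geo t‖ ^ 2 = 1 := by
    rw [geo, norm_combo]
    nlinarith [Real.sin_sq_add_cos_sq (π/2*(t+1))]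
  nlinarith [norm_nonneg (geo t)]

lemma geo_neg_one : geo (-1) = E2 := by
  simp [geo]

lemma geo_one : geo 1 = -E2 := by
  have : π/2*((1:ℝ)+1) = π := by ring
  simp [geo, this]

instance : IsFiniteMeasure (volume.restrict (Set.Ioc (-1:ℝ) 1)) := by
  constructor
  rw [Measure.restrict_apply_univ, Real.volume_Ioc]
  exact ENNReal.ofReal_lt_top

lemma geo_memℒp : MemLp geo' 2 (volume.restrict (Set.Ioc (-1:ℝ) 1)) := by
  apply MemLp.mono_exponent (q := ⊤) _ le_top
  apply memLp_top_of_bound continuous_geo'.aestronglyMeasurable π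
  have hE1 : ‖E1‖ = 1 := by rw [E1, EuclideanSpace.norm_single]; exact norm_one
  have hE2 : ‖E2‖ = 1 := by rw [E2, EuclideanSpace.norm_single]; exact norm_one
  filter_upwards with t
  calc ‖geo' t‖ = ‖(-Real.sin (π/2*(t+1)) * (π/2)) • E2 + (Real.cos (π/2*(t+1)) * (π/2)) • E1‖ := rfl
    _ ≤ ‖(-Real.sin (π/2*(t+1)) * (π/2)) • E2‖ + ‖(Real.cos (π/2*(t+1)) * (π/2)) • E1‖ :=
        norm_add_le _ _
    _ = |(-Real.sin (π/2*(t+1)) * (π/2))| + |(Real.cos (π/2*(t+1)) * (π/2))| := by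
        rw [norm_smul, norm_smul, hE1, hE2, mul_one, mul_one, Real.norm_eq_abs,
          Real.norm_eq_abs]
    _ ≤ π := by
        have h4 : |π/2| = π/2 := abs_of_nonneg (by positivity)
        rw [abs_mul, abs_mul, abs_neg, h4]
        have h2 := Real.abs_sin_le_one (π/2*(t+1))
        have h3 := Real.abs_cos_le_one (π/2*(t+1))
        have h1 := abs_nonneg (Real.sin (π/2*(t+1)))
        have h0 := abs_nonneg (Real.cos (π/2*(t+1)))
        nlinarith [Real.pi_pos]

lemma geo_integral (t : ℝ) (ht : t ∈ Set.Icc (-1:ℝ) 1) :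
    geo t = geo (-1) + ∫ s in Set.Ioc (-1:ℝ) t, geo' s := by
  have h1 : ∫ s in Set.Ioc (-1:ℝ) t, geo' s = ∫ s in (-1:ℝ)..t, geo' s :=
    (intervalIntegral.integral_of_le ht.1).symm
  have h2 : ∫ s in (-1:ℝ)..t, geo' s = geo t - geo (-1) :=
    intervalIntegral.integral_eq_sub_of_hasDerivAt (fun s _ => hasDerivAt_geo s)
      (continuous_geo'.continuousOn.intervalIntegrable)
  rw [h1, h2]; abel

lemma geo_energy : ∫ t in Set.Ioc (-1:ℝ) 1, ‖geo' t‖ ^ 2 = π ^ 2 / 2 := by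
  rw [setIntegral_congr_fun measurableSet_Ioc (fun t _ => norm_geo' t)]
  rw [setIntegral_const]
  rw [measureReal_def, Real.volume_Ioc]
  rw [ENNReal.toReal_ofReal (by norm_num)]
  rw [smul_eq_mul]
  ring

set_option maxHeartbeats 1000000 in
lemma lower_bound {m g : ℝ → E3}
    (hg : MemLp g 2 (volume.restrict (Set.Ioc (-1:ℝ) 1)))
    (hm : ∀ t ∈ Set.Icc (-1:ℝ) 1, m t = m (-1) + ∫ s in Set.Ioc (-1:ℝ) t, g s)
    (hnorm : ∀ t ∈ Set.Icc (-1:ℝ) 1, ‖m t‖ = 1)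
    (hstart : m (-1) = E2) (hend : m 1 = -E2) :
    π ^ 2 / 2 ≤ ∫ t in Set.Ioc (-1:ℝ) 1, ‖g t‖ ^ 2 := by
  haveI : IsFiniteMeasure (volume.restrict (Set.Ioc (-1:ℝ) 1)) := by
    constructor
    rw [Measure.restrict_apply_univ, Real.volume_Ioc]
    exact ENNReal.ofReal_lt_top
  set μ := volume.restrict (Set.Ioc (-1:ℝ) 1) with hμdef
  -- basic integrability
  have hgi : IntegrableOn g (Set.Ioc (-1:ℝ) 1) volume := by
    have h1 : MemLp g 1 μ := hg.mono_exponent (by norm_num)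
    exact memLp_one_iff_integrable.1 h1
  -- the scalar component
  set h : ℝ → ℝ := fun t => (inner ℝ E2 (g t) : ℝ) with hhdef
  have hmeas_h : AEStronglyMeasurable h μ :=
    AEStronglyMeasurable.inner aestronglyMeasurable_const hgi.aestronglyMeasurable
  have habs_h : ∀ t, |h t| ≤ ‖g t‖ := by
    intro t
    calc |h t| ≤ ‖E2‖ * ‖g t‖ := abs_real_inner_le_norm _ _
      _ = ‖g t‖ := by rw [norm_E2, one_mul]
  have hInt_h : IntegrableOn h (Set.Ioc (-1:ℝ) 1) volume := by
    apply Integrable.mono' hgi.norm hmeas_h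
    exact Eventually.of_forall fun t => by simpa [Real.norm_eq_abs] using habs_h t
  set h₀ : ℝ → ℝ := (Set.Ioc (-1:ℝ) 1).indicator h with hh₀def
  have hInt_h₀ : Integrable h₀ volume := (integrable_indicator_iff measurableSet_Ioc).2 hInt_h
  -- the y-coordinate identity
  have hy_eq : ∀ t ∈ Set.Icc (-1:ℝ) 1,
      1 + ∫ s in (-1:ℝ)..t, h₀ s = (inner ℝ E2 (m t) : ℝ) := by
    intro t ht
    have h1 : ∫ s in (-1:ℝ)..t, h₀ s = ∫ s in Set.Ioc (-1:ℝ) t, h₀ s :=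
      intervalIntegral.integral_of_le ht.1
    have h2 : ∫ s in Set.Ioc (-1:ℝ) t, h₀ s = ∫ s in Set.Ioc (-1:ℝ) t, h s := by
      apply setIntegral_congr_fun measurableSet_Ioc
      intro s hs
      exact indicator_of_mem (show s ∈ Set.Ioc (-1:ℝ) 1 from ⟨hs.1, hs.2.trans ht.2⟩) h
    have h3 : ∫ s in Set.Ioc (-1:ℝ) t, h s = (inner ℝ E2 (∫ s in Set.Ioc (-1:ℝ) t, g s) : ℝ) :=
      integral_inner (hgi.mono_set (Set.Ioc_subset_Ioc_right ht.2)) E2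
    have h4 : (∫ s in Set.Ioc (-1:ℝ) t, g s) = m t - m (-1) := by
      rw [hm t ht]; abel
    rw [h1, h2, h3, h4, inner_sub_right, hstart, inner_E22]
    ring
  -- tangency : a.e. the derivative is orthogonal to m
  have htan : ∀ᵐ t ∂μ, (inner ℝ (m t) (g t) : ℝ) = 0 := by
    have hder := ae_hasDerivAt_primitive hgi
    have h1 : ∀ᵐ (t : ℝ) ∂volume, t ≠ (1:ℝ) := by
      refine ae_iff.2 ?_
      have : {a : ℝ | ¬a ≠ 1} = {1} := by ext a; simp
      rw [this]
      exact measure_singleton 1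
    rw [hμdef]
    filter_upwards [ae_restrict_mem measurableSet_Ioc, ae_restrict_of_ae hder,
      ae_restrict_of_ae h1] with t htIoc hderiv hne
    have htIoo : t ∈ Set.Ioo (-1:ℝ) 1 := ⟨htIoc.1, lt_of_le_of_ne htIoc.2 hne⟩
    have hDm : HasDerivAt m (g t) t := by
      apply HasDerivAt.congr_of_eventuallyEq ((hderiv htIoo).const_add (m (-1)))
      filter_upwards [isOpen_Ioo.mem_nhds htIoo] with u hu
      exact hm u (Set.Ioo_subset_Icc_self hu)
    have hq : HasDerivAt (fun u => (inner ℝ (m u) (m u) : ℝ))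
        ((inner ℝ (m t) (g t) : ℝ) + (inner ℝ (g t) (m t) : ℝ)) t := hDm.inner ℝ hDm
    have hconst : HasDerivAt (fun u => (inner ℝ (m u) (m u) : ℝ)) 0 t := by
      apply HasDerivAt.congr_of_eventuallyEq (hasDerivAt_const t (1:ℝ))
      filter_upwards [isOpen_Ioo.mem_nhds htIoo] with u hu
      have := hnorm u (Set.Ioo_subset_Icc_self hu)
      rw [real_inner_self_eq_norm_mul_norm, this, one_mul]
    have h5 := hq.unique hconst
    have h6 : (inner ℝ (m t) (g t) : ℝ) = inner ℝ (g t) (m t) := real_inner_comm _ _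
    linarith
  -- |y| ≤ 1 pointwise on Icc
  have hy_le : ∀ t ∈ Set.Icc (-1:ℝ) 1, |(inner ℝ E2 (m t) : ℝ)| ≤ 1 := by
    intro t ht
    calc |(inner ℝ E2 (m t) : ℝ)| ≤ ‖E2‖ * ‖m t‖ := abs_real_inner_le_norm _ _
      _ = 1 := by rw [norm_E2, hnorm t ht, one_mul]
  -- nonnegativity and integrability of the energy integrand
  have hg_norm_int : IntegrableOn (fun t => ‖g t‖) (Set.Ioc (-1:ℝ) 1) volume := hgi.norm
  have hEnn : 0 ≤ ∫ t in Set.Ioc (-1:ℝ) 1, ‖g t‖ ^ 2 :=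
    setIntegral_nonneg measurableSet_Ioc fun t _ => sq_nonneg _
  set En : ℝ := ∫ t in Set.Ioc (-1:ℝ) 1, ‖g t‖ ^ 2 with hEndef
  -- the main inequality for each r < 1
  have hmain : ∀ r : ℝ, r ∈ Set.Ioo (0:ℝ) 1 → 2 * arcsin r ≤ Real.sqrt 2 * Real.sqrt En := by
    intro r hr
    set cl : ℝ → ℝ := fun s => max (-1) (min s 1) with hcldef
    have hcl_cont : Continuous cl := by fun_prop
    have hcl_le : ∀ s, |cl s| ≤ 1 := by
      intro s
      rw [abs_le]
      exact ⟨le_max_left _ _, max_le (by norm_num) (min_le_right _ _)⟩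
    have hcl_eq : ∀ s : ℝ, |s| ≤ 1 → cl s = s := by
      intro s hs
      rcases abs_le.1 hs with ⟨h1', h2'⟩
      rw [hcldef]
      simp only [min_eq_left h2', max_eq_right h1']
    have hr2 : r^2 < 1 := by nlinarith [hr.1, hr.2]
    have hd_pos : ∀ s, 0 < 1 - r^2 * (cl s)^2 := by
      intro s
      have h1 : (cl s)^2 ≤ 1 := (sq_le_one_iff_abs_le_one (cl s)).2 (hcl_le s)
      nlinarith [hr.1, hr.2, sq_nonneg (cl s)]
    set D : ℝ → ℝ := fun s => r / Real.sqrt (1 - r^2 * (cl s)^2) with hDdef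
    have hsq_pos : ∀ s, 0 < Real.sqrt (1 - r^2 * (cl s)^2) :=
      fun s => Real.sqrt_pos.2 (hd_pos s)
    have hD_cont : Continuous D := by
      apply continuous_const.div
      · exact Real.continuous_sqrt.comp (by fun_prop)
      · exact fun s => (hsq_pos s).ne'
    have hD_nonneg : ∀ s, 0 ≤ D s := fun s => div_nonneg hr.1.le (hsq_pos s).le
    set C : ℝ := r / Real.sqrt (1 - r^2) with hCdef
    have hC0 : 0 ≤ C := div_nonneg hr.1.le (Real.sqrt_nonneg _)
    have hD_bdd : ∀ s, |D s| ≤ C := by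
      intro s
      rw [abs_of_nonneg (hD_nonneg s)]
      apply div_le_div_of_nonneg_left hr.1.le (Real.sqrt_pos.2 (by nlinarith))
      apply Real.sqrt_le_sqrt
      have h1 : (cl s)^2 ≤ 1 := (sq_le_one_iff_abs_le_one (cl s)).2 (hcl_le s)
      nlinarith [hr.1]
    -- the primitive of D
    set φ : ℝ → ℝ := fun s => ∫ u in (0:ℝ)..s, D u with hφdef
    have hφd : ∀ s, HasDerivAt φ (D s) s := by
      intro s
      exact intervalIntegral.integral_hasDerivAt_right (hD_cont.intervalIntegrable _ _)
        (hD_cont.stronglyMeasurableAtFilter _ _) hD_cont.continuousAt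
    -- φ 1 - φ (-1) = 2 * arcsin r
    have hφval : φ 1 - φ (-1) = 2 * arcsin r := by
      have h1 : φ 1 - φ (-1) = ∫ u in (-1:ℝ)..1, D u :=
        intervalIntegral.integral_interval_sub_left (hD_cont.intervalIntegrable _ _)
          (hD_cont.intervalIntegrable _ _)
      have h2 : ∫ u in (-1:ℝ)..1, D u = arcsin (r*1) - arcsin (r*(-1)) := by
        refine intervalIntegral.integral_eq_sub_of_hasDerivAt
          (f := fun v => arcsin (r*v)) (f' := D) ?_ (hD_cont.intervalIntegrable _ _)
        · intro u hu
          rw [Set.uIcc_of_le (by norm_num : (-1:ℝ) ≤ 1)] at hu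
          have hu1 : |u| ≤ 1 := abs_le.2 ⟨hu.1, hu.2⟩
          have hru : |r * u| < 1 := by
            rw [abs_mul, abs_of_nonneg hr.1.le]
            nlinarith [hr.1, hr.2, abs_nonneg u]
          have hd : HasDerivAt (fun v : ℝ => arcsin (r * v))
              ((1 / Real.sqrt (1 - (r*u)^2)) * r) u := by
            have hne1 : r * u ≠ -1 := by
              intro hcon; rw [hcon] at hru; norm_num at hru
            have hne2 : r * u ≠ 1 := by
              intro hcon; rw [hcon] at hru; norm_num at hru
            have hlin : HasDerivAt (fun v : ℝ => r * v) r u := by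
              simpa using (hasDerivAt_id u).const_mul r
            exact (Real.hasDerivAt_arcsin hne1 hne2).comp u hlin
          have heq : D u = (1 / Real.sqrt (1 - (r*u)^2)) * r := by
            rw [hDdef]
            simp only
            rw [hcl_eq u hu1]
            rw [one_div, inv_mul_eq_div]
            congr 1
            ring_nf
          rw [heq]
          exact hd
      rw [h1, h2, mul_one, mul_neg_one, Real.arcsin_neg]
      ring
    -- apply the FTC composition lemma
    have hftc := ftc_comp hInt_h₀ hD_cont hC0 hD_bdd hφd 1
    have hy1 : 1 + ∫ s in (-1:ℝ)..1, h₀ s = -1 := by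
      rw [hy_eq 1 (by norm_num : (1:ℝ) ∈ Set.Icc (-1:ℝ) 1)]
      rw [hend, inner_neg_right, inner_E22]
    rw [hy1] at hftc
    -- rewrite the integrand on Ioc
    have hcongr : ∫ t in Set.Ioc (-1:ℝ) 1, D (1 + ∫ s in (-1:ℝ)..t, h₀ s) * h₀ t
        = ∫ t in Set.Ioc (-1:ℝ) 1, D (inner ℝ E2 (m t) : ℝ) * h t := by
      apply setIntegral_congr_fun measurableSet_Ioc
      intro t ht
      have h1 := hy_eq t (Set.Ioc_subset_Icc_self ht)
      show D (1 + ∫ s in (-1:ℝ)..t, h₀ s) * h₀ t = D (inner ℝ E2 (m t) : ℝ) * h t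
      rw [h1]
      congr 1
      exact indicator_of_mem ht h
    rw [hcongr] at hftc
    -- pointwise a.e. bound
    have hbound : ∀ᵐ t ∂μ, |D (inner ℝ E2 (m t) : ℝ) * h t| ≤ ‖g t‖ := by
      filter_upwards [htan, ae_restrict_mem measurableSet_Ioc] with t htan' htIoc
      set s : ℝ := (inner ℝ E2 (m t) : ℝ) with hsdef
      have htIcc := Set.Ioc_subset_Icc_self htIoc
      have hs1 : |s| ≤ 1 := hy_le t htIcc
      have hs1' : s^2 ≤ 1 := (sq_le_one_iff_abs_le_one s).2 hs1
      -- |h t| ≤ ‖g t‖ * sqrt (1 - s^2)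
      have hh : |h t| ≤ ‖g t‖ * Real.sqrt (1 - s^2) := by
        have hdecomp : h t = (inner ℝ (E2 - s • m t) (g t) : ℝ) := by
          rw [inner_sub_left, real_inner_smul_left, htan']
          simp [hhdef]
        have hnormdiff : ‖E2 - s • m t‖ = Real.sqrt (1 - s^2) := by
          have h1 : ‖E2 - s • m t‖^2 = 1 - s^2 := by
            rw [norm_sub_sq_real, real_inner_smul_right, norm_smul, norm_E2,
              hnorm t htIcc, Real.norm_eq_abs, mul_one, one_pow, sq_abs, ← hsdef]
            ring
          rw [← h1, Real.sqrt_sq (norm_nonneg _)]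
        calc |h t| = |(inner ℝ (E2 - s • m t) (g t) : ℝ)| := by rw [hdecomp]
          _ ≤ ‖E2 - s • m t‖ * ‖g t‖ := abs_real_inner_le_norm _ _
          _ = ‖g t‖ * Real.sqrt (1 - s^2) := by rw [hnormdiff]; ring
      clear_value s
      -- D s * sqrt (1 - s^2) ≤ 1
      have hDs : D s * Real.sqrt (1 - s^2) ≤ 1 := by
        have hd1 : Real.sqrt (r^2 * (1 - s^2)) ≤ Real.sqrt (1 - r^2*s^2) := by
          apply Real.sqrt_le_sqrt
          nlinarith [hr.1, hr.2]
        have hd2 : r * Real.sqrt (1 - s^2) = Real.sqrt (r^2 * (1 - s^2)) := by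
          rw [Real.sqrt_mul (sq_nonneg r), Real.sqrt_sq hr.1.le]
        have hpos : 0 < Real.sqrt (1 - r^2 * s^2) := Real.sqrt_pos.2 (by nlinarith [hr.1, hr.2])
        have hDval : D s = r / Real.sqrt (1 - r^2 * s^2) := by
          rw [hDdef]
          simp only
          rw [hcl_eq s hs1]
        rw [hDval, div_mul_eq_mul_div, div_le_one hpos]
        linarith [hd1, hd2]
      calc |D s * h t| = D s * |h t| := by
            rw [abs_mul, abs_of_nonneg (hD_nonneg s)]
        _ ≤ D s * (‖g t‖ * Real.sqrt (1 - s^2)) :=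
            mul_le_mul_of_nonneg_left hh (hD_nonneg s)
        _ = (D s * Real.sqrt (1 - s^2)) * ‖g t‖ := by ring
        _ ≤ 1 * ‖g t‖ := mul_le_mul_of_nonneg_right hDs (norm_nonneg _)
        _ = ‖g t‖ := one_mul _
    -- integrability of the integrand
    have hYcont : Continuous (fun t => 1 + ∫ s in (-1:ℝ)..t, h₀ s) :=
      continuous_const.add (hInt_h₀.continuous_primitive (-1))
    have hae_eq : (fun t => D (inner ℝ E2 (m t) : ℝ) * h t)
        =ᵐ[μ] (fun t => D (1 + ∫ s in (-1:ℝ)..t, h₀ s) * h t) := by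
      rw [hμdef]
      filter_upwards [ae_restrict_mem measurableSet_Ioc] with t ht
      rw [hy_eq t (Set.Ioc_subset_Icc_self ht)]
    have hDh_int : IntegrableOn (fun t => D (inner ℝ E2 (m t) : ℝ) * h t)
        (Set.Ioc (-1:ℝ) 1) volume := by
      apply Integrable.mono' hg_norm_int
      · exact (((hD_cont.comp hYcont).aestronglyMeasurable).mul hmeas_h).congr hae_eq.symm
      · filter_upwards [hbound] with t ht
        rwa [Real.norm_eq_abs]
    -- chain of inequalities
    have hstep1 : 2 * arcsin r ≤ ∫ t in Set.Ioc (-1:ℝ) 1, ‖g t‖ := by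
      have h1 : 2 * arcsin r = -(φ (-1) - φ 1) := by rw [← hφval]; ring
      have h2 : -(φ (-1) - φ 1) = -(∫ t in Set.Ioc (-1:ℝ) 1, D (inner ℝ E2 (m t) : ℝ) * h t) := by
        rw [hftc]
      rw [h1, h2]
      calc -(∫ t in Set.Ioc (-1:ℝ) 1, D (inner ℝ E2 (m t) : ℝ) * h t)
          ≤ |∫ t in Set.Ioc (-1:ℝ) 1, D (inner ℝ E2 (m t) : ℝ) * h t| := neg_le_abs _
        _ ≤ ∫ t in Set.Ioc (-1:ℝ) 1, |D (inner ℝ E2 (m t) : ℝ) * h t| := by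
            have hni := norm_integral_le_integral_norm
              (f := fun t => D (inner ℝ E2 (m t) : ℝ) * h t) (μ := μ)
            simp only [Real.norm_eq_abs] at hni
            exact hni
        _ ≤ ∫ t in Set.Ioc (-1:ℝ) 1, ‖g t‖ :=
            integral_mono_ae hDh_int.norm hg_norm_int hbound
    -- Cauchy-Schwarz
    have hstep2 : ∫ t in Set.Ioc (-1:ℝ) 1, ‖g t‖ ≤ Real.sqrt 2 * Real.sqrt En := by
      have hpq : Real.HolderConjugate 2 2 := ⟨by norm_num, by norm_num, by norm_num⟩
      have h2 : MemLp (fun t => ‖g t‖) (ENNReal.ofReal 2) μ := by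
        have := hg.norm
        convert this using 2
        simp [ENNReal.ofReal_ofNat]
      have h3 : MemLp (fun _ : ℝ => (1:ℝ)) (ENNReal.ofReal 2) μ := memLp_const 1
      have hCS := integral_mul_le_Lp_mul_Lq_of_nonneg hpq
        (Eventually.of_forall fun t => norm_nonneg (g t))
        (Eventually.of_forall fun _ => zero_le_one) h2 h3
      have h5 : ∫ t, ‖g t‖ ^ (2:ℝ) ∂μ = En := by
        rw [hEndef]
        apply integral_congr_ae
        filter_upwards with t
        rw [← Real.rpow_natCast ‖g t‖ 2]
        norm_num
      have hB : ∫ (_ : ℝ), (1:ℝ) ^ (2:ℝ) ∂μ = 2 := by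
        simp only [Real.one_rpow]
        rw [integral_const, smul_eq_mul, mul_one, hμdef, measureReal_def, Measure.restrict_apply_univ,
          Real.volume_Ioc, ENNReal.toReal_ofReal (by norm_num)]
        norm_num
      calc ∫ t in Set.Ioc (-1:ℝ) 1, ‖g t‖ = ∫ a, ‖g a‖ * 1 ∂μ := by simp [hμdef]
        _ ≤ (∫ a, ‖g a‖ ^ (2:ℝ) ∂μ) ^ (1/2:ℝ) * (∫ a, (1:ℝ) ^ (2:ℝ) ∂μ) ^ (1/2:ℝ) := hCS
        _ = En ^ (1/2:ℝ) * 2 ^ (1/2:ℝ) := by rw [h5, hB]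
        _ = Real.sqrt En * Real.sqrt 2 := by
            rw [Real.sqrt_eq_rpow, Real.sqrt_eq_rpow]
        _ = Real.sqrt 2 * Real.sqrt En := mul_comm _ _
    linarith
  -- pass to the limit r → 1⁻
  have hlim : π ≤ Real.sqrt 2 * Real.sqrt En := by
    have htend : Tendsto (fun r : ℝ => 2 * arcsin r) (𝓝[<] (1:ℝ)) (𝓝 (2 * arcsin 1)) := by
      apply Tendsto.const_mul
      exact (Real.continuous_arcsin.tendsto 1).mono_left nhdsWithin_le_nhds
    have hev : ∀ᶠ r in 𝓝[<] (1:ℝ), 2 * arcsin r ≤ Real.sqrt 2 * Real.sqrt En := by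
      filter_upwards [Ioo_mem_nhdsLT_of_mem (show (1:ℝ) ∈ Set.Ioc (0:ℝ) 1 by norm_num)]
        with r hr
      exact hmain r hr
    have := le_of_tendsto htend hev
    rwa [Real.arcsin_one, mul_comm 2 (π/2), div_mul_cancel₀] at this
    norm_num
  -- conclude
  have h2E : π^2 ≤ 2 * En := by
    have h1 : Real.sqrt 2 * Real.sqrt En = Real.sqrt (2 * En) :=
      (Real.sqrt_mul (by norm_num) En).symm
    rw [h1] at hlim
    have := Real.sq_sqrt (by positivity : (0:ℝ) ≤ 2 * En)
    nlinarith [Real.sqrt_nonneg (2 * En), Real.pi_pos]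
  linarith

end

end MinEnergyAux

open MinEnergyAux

/-- The minimum Dirichlet energy of `W^{1,2}` curves on `(-1,1)` with values in the unit
sphere `S²` joining `e₂` to `-e₂` is `π²/2`. A `W^{1,2}` curve is represented by its
(continuous representative) `m` together with its weak derivative `g ∈ L²`, so that
`m t = m (-1) + ∫_{-1}^t g`. -/
theorem min_energy_antipodal_curves :
    IsLeast {E : ℝ | ∃ m g : ℝ → EuclideanSpace ℝ (Fin 3),
        MemLp g 2 (volume.restrict (Set.Ioc (-1 : ℝ) 1)) ∧
        (∀ t ∈ Set.Icc (-1 : ℝ) 1, m t = m (-1) + ∫ s in Set.Ioc (-1 : ℝ) t, g s) ∧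
        (∀ t ∈ Set.Icc (-1 : ℝ) 1, ‖m t‖ = 1) ∧
        m (-1) = EuclideanSpace.single 1 1 ∧
        m 1 = -EuclideanSpace.single 1 1 ∧
        E = ∫ t in Set.Ioc (-1 : ℝ) 1, ‖g t‖ ^ 2}
      (Real.pi ^ 2 / 2) := by
  constructor
  · refine ⟨geo, geo', geo_memℒp, geo_integral, fun t _ => norm_geo t, geo_neg_one, ?_, ?_⟩
    · exact geo_one
    · exact geo_energy.symm
  · rintro En ⟨m, g, hg, hm, hnorm, hstart, hend, hE⟩
    rw [hE]
    exact lower_bound hg hm hnorm hstart hend
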